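/- arXiv:2201.07439 — 2 statements merged into one kernel-verified Lean document; each statement's English description precedes it below -/
import Mathlib

section
/- A single elementary Knuth relation preserves the length of the longest increasing subsequence: if w and π in S_n differ by one Knuth relation of the first or second kind, then their longest increasing subsequences have equal length. -/
/-- One-line notation for an element of `S_n`: a list that is a permutation of `1, …, n`. -/
def IsOneLine (n : ℕ) (w : List ℕ) : Prop :=
  w.Perm ((List.range n).map (· + 1))

/-- `w` and `π` differ by a single elementary Knuth relation (first or second kind,
in either direction). -/
def KnuthStep (w π : List ℕ) : Prop :=
  ∃ u v : List ℕ, ∃ x y z : ℕ, x < y ∧ y < z ∧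
    ((w = u ++ y :: x :: z :: v ∧ π = u ++ y :: z :: x :: v) ∨
     (w = u ++ y :: z :: x :: v ∧ π = u ++ y :: x :: z :: v) ∨
     (w = u ++ x :: z :: y :: v ∧ π = u ++ z :: x :: y :: v) ∨
     (w = u ++ z :: x :: y :: v ∧ π = u ++ x :: z :: y :: v))

/-- Knuth equivalence: the reflexive-transitive closure of elementary Knuth relations. -/
def KnuthEquiv : List ℕ → List ℕ → Prop :=
  Relation.ReflTransGen KnuthStep

/-- `w` contains the pattern `3412`: a subsequence `(a, b, c, d)` with `c < d < a < b`. -/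
def Contains3412 (w : List ℕ) : Prop :=
  ∃ a b c d : ℕ, c < d ∧ d < a ∧ a < b ∧ [a, b, c, d].Sublist w

/-- `w` contains the pattern `4231`: a subsequence `(a, b, c, d)` with `d < b < c < a`. -/
def Contains4231 (w : List ℕ) : Prop :=
  ∃ a b c d : ℕ, d < b ∧ b < c ∧ c < a ∧ [a, b, c, d].Sublist w

/-- The decreasing run `hi, hi - 1, …, lo`. -/
def descFromTo (hi lo : ℕ) : List ℕ :=
  (List.range (hi + 1 - lo)).map (fun i => hi - i)

/-- The increasing run `lo, lo + 1, …, hi`. -/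
def ascFromTo (lo hi : ℕ) : List ℕ :=
  (List.range (hi + 1 - lo)).map (fun i => lo + i)

/-- The length of a longest strictly increasing subsequence of `w`. -/
def lisLen (w : List ℕ) : ℕ :=
  ((w.sublists.filter (fun l => decide (l.IsChain (· < ·)))).map List.length).foldr max 0

/-- The length of a longest strictly decreasing subsequence of `w`. -/
def ldsLen (w : List ℕ) : ℕ :=
  ((w.sublists.filter (fun l => decide (l.IsChain (· > ·)))).map List.length).foldr max 0

/-- The one-line word of the longest element of the Young subgroup attached to a
composition: each consecutive block is reversed.  `s` is the offset already consumed. -/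
def blockRevWord : List ℕ → ℕ → List ℕ
  | [], _ => []
  | m :: rest, s => descFromTo (s + m) (s + 1) ++ blockRevWord rest (s + m)

section LisAux

private lemma foldr_max_mem : ∀ (L : List ℕ), L.foldr max 0 = 0 ∨ L.foldr max 0 ∈ L := by
  intro L
  induction L with
  | nil => left; rfl
  | cons a L ih =>
    simp only [List.foldr_cons]
    rcases max_choice a (L.foldr max 0) with h | h
    · right; rw [h]; exact List.mem_cons_self
    · rw [h]
      rcases ih with h0 | hm
      · left; exact h0
      · right; exact List.mem_cons_of_mem _ hm

private lemma le_foldr_max {L : List ℕ} {a : ℕ} (h : a ∈ L) : a ≤ L.foldr max 0 := by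
  induction L with
  | nil => cases h
  | cons b L ih =>
    simp only [List.foldr_cons]
    rcases List.mem_cons.1 h with rfl | h
    · exact le_max_left _ _
    · exact le_trans (ih h) (le_max_right _ _)

private lemma le_lisLen {w l : List ℕ} (hs : l.Sublist w) (hc : l.IsChain (· < ·)) :
    l.length ≤ lisLen w := by
  apply le_foldr_max
  simp only [List.mem_map, List.mem_filter, List.mem_sublists]
  exact ⟨l, ⟨hs, by simpa using hc⟩, rfl⟩

private lemma lisLen_attained (w : List ℕ) :
    ∃ l : List ℕ, l.Sublist w ∧ l.IsChain (· < ·) ∧ l.length = lisLen w := by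
  unfold lisLen
  have hmem := foldr_max_mem ((w.sublists.filter (fun l => decide (l.IsChain (· < ·)))).map List.length)
  rcases hmem with h | h
  · exact ⟨[], List.nil_sublist _, List.isChain_nil, h.symm⟩
  · simp only [List.mem_map, List.mem_filter, List.mem_sublists] at h
    obtain ⟨l, ⟨hs, hc⟩, hl⟩ := h
    exact ⟨l, hs, by simpa using hc, hl⟩

private lemma sublist3 {a b c : ℕ} {l : List ℕ} (h : l.Sublist [a, b, c]) :
    l = [] ∨ l = [a] ∨ l = [b] ∨ l = [c] ∨ l = [a, b] ∨ l = [a, c] ∨ l = [b, c] ∨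
      l = [a, b, c] := by
  have h2 : l ∈ ([a, b, c]).sublists := List.mem_sublists.2 h
  simp [List.sublists] at h2
  tauto

private lemma replace_mid (l1 l3 : List ℕ) {a b a' b' : ℕ} (h1 : a ≤ a') (h2 : b' ≤ b)
    (h3 : a' < b') (hc : (l1 ++ [a, b] ++ l3).IsChain (· < ·)) :
    (l1 ++ [a', b'] ++ l3).IsChain (· < ·) := by
  simp only [List.isChain_append, List.isChain_cons_cons, List.isChain_singleton, List.head?_cons,
    List.getLast?_append, List.getLast?_cons_cons, List.getLast?_singleton, Option.some_or,
    Option.mem_def, Option.some.injEq] at hc ⊢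
  obtain ⟨⟨hl1, ⟨hab, -⟩, hla⟩, hl3, hbl3⟩ := hc
  refine ⟨⟨hl1, ⟨h3, trivial⟩, ?_⟩, hl3, ?_⟩
  · intro p hp q hq; subst hq; exact lt_of_lt_of_le (hla p hp a rfl) h1
  · intro p hp q hq; subst hp; exact lt_of_le_of_lt h2 (hbl3 b rfl q hq)

private lemma mid_chain {l1 l2 l3 : List ℕ} (hc : (l1 ++ l2 ++ l3).IsChain (· < ·)) :
    l2.IsChain (· < ·) :=
  hc.sublist ((List.sublist_append_right l1 l2).trans (List.sublist_append_left (l1 ++ l2) l3))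

/-- Transfer property between two middle words. -/
def Transfer (m m' : List ℕ) : Prop :=
  ∀ l1 l2 l3 : List ℕ, (l1 ++ l2 ++ l3).IsChain (· < ·) → l2.Sublist m →
    ∃ l2' : List ℕ, l2'.Sublist m' ∧ l2'.length = l2.length ∧
      (l1 ++ l2' ++ l3).IsChain (· < ·)

private lemma lis_le_of_transfer (u v : List ℕ) {m m' : List ℕ} (H : Transfer m m') :
    lisLen (u ++ m ++ v) ≤ lisLen (u ++ m' ++ v) := by
  obtain ⟨l, hs, hc, hlen⟩ := lisLen_attained (u ++ m ++ v)
  obtain ⟨l12, l3, rfl, h12, h3⟩ := List.sublist_append_iff.1 hs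
  obtain ⟨l1, l2, rfl, h1, h2⟩ := List.sublist_append_iff.1 h12
  obtain ⟨l2', hs', hlen', hc'⟩ := H l1 l2 l3 hc h2
  have hsub : (l1 ++ l2' ++ l3).Sublist (u ++ m' ++ v) := (h1.append hs').append h3
  calc lisLen (u ++ m ++ v) = (l1 ++ l2 ++ l3).length := hlen.symm
    _ = (l1 ++ l2' ++ l3).length := by simp [hlen']
    _ ≤ lisLen (u ++ m' ++ v) := le_lisLen hsub hc'

private lemma transfer1 {x y z : ℕ} (hxy : x < y) (hyz : y < z) :
    Transfer [y, x, z] [y, z, x] := by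
  intro l1 l2 l3 hc hs
  have hch := mid_chain hc
  rcases sublist3 hs with rfl | rfl | rfl | rfl | rfl | rfl | rfl | rfl
  · exact ⟨[], by simp, rfl, hc⟩
  · exact ⟨[y], by simp, rfl, hc⟩
  · exact ⟨[x], by simp, rfl, hc⟩
  · exact ⟨[z], by simp, rfl, hc⟩
  · simp only [List.isChain_cons_cons, List.isChain_singleton] at hch; omega
  · exact ⟨[y, z], by simp, rfl, hc⟩
  · exact ⟨[y, z], by simp, rfl, replace_mid l1 l3 hxy.le le_rfl hyz hc⟩
  · simp only [List.isChain_cons_cons, List.isChain_singleton] at hch; omega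

private lemma transfer2 {x y z : ℕ} (hxy : x < y) (hyz : y < z) :
    Transfer [y, z, x] [y, x, z] := by
  intro l1 l2 l3 hc hs
  have hch := mid_chain hc
  rcases sublist3 hs with rfl | rfl | rfl | rfl | rfl | rfl | rfl | rfl
  · exact ⟨[], by simp, rfl, hc⟩
  · exact ⟨[y], by simp, rfl, hc⟩
  · exact ⟨[z], by simp, rfl, hc⟩
  · exact ⟨[x], by simp, rfl, hc⟩
  · exact ⟨[y, z], by simp, rfl, hc⟩
  · simp only [List.isChain_cons_cons, List.isChain_singleton] at hch; omega
  · simp only [List.isChain_cons_cons, List.isChain_singleton] at hch; omega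
  · simp only [List.isChain_cons_cons, List.isChain_singleton] at hch; omega

private lemma transfer3 {x y z : ℕ} (hxy : x < y) (hyz : y < z) :
    Transfer [x, z, y] [z, x, y] := by
  intro l1 l2 l3 hc hs
  have hch := mid_chain hc
  rcases sublist3 hs with rfl | rfl | rfl | rfl | rfl | rfl | rfl | rfl
  · exact ⟨[], by simp, rfl, hc⟩
  · exact ⟨[x], by simp, rfl, hc⟩
  · exact ⟨[z], by simp, rfl, hc⟩
  · exact ⟨[y], by simp, rfl, hc⟩
  · exact ⟨[x, y], by simp, rfl, replace_mid l1 l3 le_rfl hyz.le hxy hc⟩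
  · exact ⟨[x, y], by simp, rfl, hc⟩
  · simp only [List.isChain_cons_cons, List.isChain_singleton] at hch; omega
  · simp only [List.isChain_cons_cons, List.isChain_singleton] at hch; omega

private lemma transfer4 {x y z : ℕ} (hxy : x < y) (hyz : y < z) :
    Transfer [z, x, y] [x, z, y] := by
  intro l1 l2 l3 hc hs
  have hch := mid_chain hc
  rcases sublist3 hs with rfl | rfl | rfl | rfl | rfl | rfl | rfl | rfl
  · exact ⟨[], by simp, rfl, hc⟩
  · exact ⟨[z], by simp, rfl, hc⟩
  · exact ⟨[x], by simp, rfl, hc⟩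
  · exact ⟨[y], by simp, rfl, hc⟩
  · simp only [List.isChain_cons_cons, List.isChain_singleton] at hch; omega
  · simp only [List.isChain_cons_cons, List.isChain_singleton] at hch; omega
  · exact ⟨[x, y], by simp, rfl, hc⟩
  · simp only [List.isChain_cons_cons, List.isChain_singleton] at hch; omega

end LisAux

theorem stmt9 (n : ℕ) (w π : List ℕ) (hw : IsOneLine n w)
    (hstep : KnuthStep w π) :
    lisLen w = lisLen π := by
  obtain ⟨u, v, x, y, z, hxy, hyz, hcase⟩ := hstep
  rcases hcase with ⟨rfl, rfl⟩ | ⟨rfl, rfl⟩ | ⟨rfl, rfl⟩ | ⟨rfl, rfl⟩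
  · have e1 : u ++ y :: x :: z :: v = u ++ [y, x, z] ++ v := by simp
    have e2 : u ++ y :: z :: x :: v = u ++ [y, z, x] ++ v := by simp
    rw [e1, e2]
    exact le_antisymm (lis_le_of_transfer u v (transfer1 hxy hyz))
      (lis_le_of_transfer u v (transfer2 hxy hyz))
  · have e1 : u ++ y :: z :: x :: v = u ++ [y, z, x] ++ v := by simp
    have e2 : u ++ y :: x :: z :: v = u ++ [y, x, z] ++ v := by simp
    rw [e1, e2]
    exact le_antisymm (lis_le_of_transfer u v (transfer2 hxy hyz))
      (lis_le_of_transfer u v (transfer1 hxy hyz))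
  · have e1 : u ++ x :: z :: y :: v = u ++ [x, z, y] ++ v := by simp
    have e2 : u ++ z :: x :: y :: v = u ++ [z, x, y] ++ v := by simp
    rw [e1, e2]
    exact le_antisymm (lis_le_of_transfer u v (transfer3 hxy hyz))
      (lis_le_of_transfer u v (transfer4 hxy hyz))
  · have e1 : u ++ z :: x :: y :: v = u ++ [z, x, y] ++ v := by simp
    have e2 : u ++ x :: z :: y :: v = u ++ [x, z, y] ++ v := by simp
    rw [e1, e2]
    exact le_antisymm (lis_le_of_transfer u v (transfer4 hxy hyz))
      (lis_le_of_transfer u v (transfer3 hxy hyz))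
end

section
/- For k ≥ 3, in every permutation Knuth equivalent to the row word of the 2×k rectangular tableau (rows 1..k and k+1..2k), the value k+2 occurs before the value k-1. -/
def pk (k : ℕ) : ℕ → Bool := fun v => decide (k-2 ≤ v ∧ v ≤ k+3)

def InS (k : ℕ) (l : List ℕ) : Prop :=
  l = [k+1,k-2,k+2,k-1,k+3,k] ∨ l = [k+1,k-2,k+2,k+3,k-1,k] ∨
  l = [k+1,k+2,k-2,k-1,k+3,k] ∨ l = [k+1,k+2,k-2,k+3,k-1,k] ∨
  l = [k+1,k+2,k+3,k-2,k-1,k]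

lemma decomp6 {l1 l2 : List ℕ} {a b c p1 p2 p3 p4 p5 p6 : ℕ}
    (h : l1 ++ a :: b :: c :: l2 = [p1,p2,p3,p4,p5,p6]) :
    (l1 = [] ∧ a=p1 ∧ b=p2 ∧ c=p3 ∧ l2=[p4,p5,p6]) ∨
    (l1 = [p1] ∧ a=p2 ∧ b=p3 ∧ c=p4 ∧ l2=[p5,p6]) ∨
    (l1 = [p1,p2] ∧ a=p3 ∧ b=p4 ∧ c=p5 ∧ l2=[p6]) ∨
    (l1 = [p1,p2,p3] ∧ a=p4 ∧ b=p5 ∧ c=p6 ∧ l2=[]) := by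
  match l1 with
  | [] => left; simp_all
  | [e] => right; left; simp_all
  | [e,f] => right; right; left; simp_all
  | [e,f,g] => right; right; right; simp_all
  | e::f::g::i::t =>
    exfalso
    have := congrArg List.length h
    simp at this
    omega

lemma ascFromTo_split (lo mid hi : ℕ) (h1 : lo ≤ mid + 1) (h2 : mid ≤ hi) :
    ascFromTo lo hi = ascFromTo lo mid ++ ascFromTo (mid+1) hi := by
  unfold ascFromTo
  rw [show hi + 1 - lo = (mid + 1 - lo) + (hi - mid) from by omega, List.range_add,
    List.map_append, List.map_map, show hi + 1 - (mid+1) = hi - mid from by omega]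
  congr 1
  apply List.map_congr_left
  intro a _
  simp; omega

lemma mem_ascFromTo {a lo hi : ℕ} (h : a ∈ ascFromTo lo hi) : lo ≤ a ∧ a ≤ hi := by
  unfold ascFromTo at h
  simp at h
  obtain ⟨i, hi, rfl⟩ := h
  omega

lemma asc_three (lo hi : ℕ) (h : lo + 2 = hi) : ascFromTo lo hi = [lo, lo+1, lo+2] := by
  subst h
  unfold ascFromTo
  rw [show lo+2+1-lo = 3 from by omega]
  simp [List.range_succ]

lemma base (k : ℕ) (hk : 3 ≤ k) :
    InS k ((ascFromTo (k + 1) (2 * k) ++ ascFromTo 1 k).filter (pk k)) := by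
  have e1 : ascFromTo (k+1) (2*k) = ascFromTo (k+1) (k+3) ++ ascFromTo (k+3+1) (2*k) :=
    ascFromTo_split _ _ _ (by omega) (by omega)
  have e2 : ascFromTo 1 k = ascFromTo 1 (k-3) ++ ascFromTo (k-3+1) k :=
    ascFromTo_split _ _ _ (by omega) (by omega)
  have f1 : (ascFromTo (k+1) (k+3)).filter (pk k) = [k+1, k+2, k+3] := by
    rw [asc_three _ _ rfl]
    rw [List.filter_eq_self.mpr]
    intro a ha
    simp at ha
    simp only [pk, decide_eq_true_eq]
    rcases ha with rfl | rfl | rfl <;> omega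
  have f2 : (ascFromTo (k+3+1) (2*k)).filter (pk k) = [] := by
    rw [List.filter_eq_nil_iff.mpr]
    intro a ha
    have := mem_ascFromTo ha
    simp only [pk, decide_eq_true_eq]
    omega
  have f3 : (ascFromTo 1 (k-3)).filter (pk k) = [] := by
    rw [List.filter_eq_nil_iff.mpr]
    intro a ha
    have := mem_ascFromTo ha
    simp only [pk, decide_eq_true_eq]
    omega
  have f4 : (ascFromTo (k-3+1) k).filter (pk k) = [k-2, k-1, k] := by
    rw [asc_three _ _ (by omega)]
    rw [List.filter_eq_self.mpr]
    · have e1 : k-3+1 = k-2 := by omega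
      have e2 : k-2+1 = k-1 := by omega
      have e3 : k-2+2 = k := by omega
      rw [e1, e2, e3]
    · intro a ha
      simp at ha
      simp only [pk, decide_eq_true_eq]
      rcases ha with rfl | rfl | rfl <;> omega
  rw [e1, e2]
  unfold InS
  simp only [List.filter_append, f1, f2, f3, f4]
  right; right; right; right
  simp

lemma knuthClosure (k : ℕ) (hk : 3 ≤ k) {w π : List ℕ} (h : KnuthStep w π)
    (hw : InS k (w.filter (pk k))) : InS k (π.filter (pk k)) := by
  obtain ⟨u, v, x, y, z, hxy, hyz, hc⟩ := h
  by_cases hx : k-2 ≤ x ∧ x ≤ k+3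
  · by_cases hz : k-2 ≤ z ∧ z ≤ k+3
    · have hxt : pk k x = true := by simp only [pk, decide_eq_true_eq]; omega
      have hyt : pk k y = true := by simp only [pk, decide_eq_true_eq]; omega
      have hzt : pk k z = true := by simp only [pk, decide_eq_true_eq]; omega
      unfold InS at hw ⊢
      rcases hc with ⟨h1, h2⟩ | ⟨h1, h2⟩ | ⟨h1, h2⟩ | ⟨h1, h2⟩ <;>
        rw [h1] at hw <;> rw [h2] <;>
        simp only [List.filter_append, List.filter_cons, hxt, hyt, hzt, if_true] at hw ⊢ <;>
        rcases hw with E | E | E | E | E <;>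
        rcases decomp6 E with ⟨g1,g2,g3,g4,g5⟩|⟨g1,g2,g3,g4,g5⟩|⟨g1,g2,g3,g4,g5⟩|⟨g1,g2,g3,g4,g5⟩ <;>
        first
          | omega
          | (subst g2 g3 g4; rw [g1, g5]; simp)
    · have hzf : pk k z = false := by simp only [pk, decide_eq_false_iff_not, decide_eq_true_eq]; omega
      rcases hc with ⟨h1, h2⟩ | ⟨h1, h2⟩ | ⟨h1, h2⟩ | ⟨h1, h2⟩ <;>
        rw [h1] at hw <;> rw [h2] <;>
        simp only [List.filter_append, List.filter_cons, hzf] at hw ⊢ <;>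
        exact hw
  · have hxf : pk k x = false := by simp only [pk, decide_eq_false_iff_not, decide_eq_true_eq]; omega
    rcases hc with ⟨h1, h2⟩ | ⟨h1, h2⟩ | ⟨h1, h2⟩ | ⟨h1, h2⟩ <;>
      rw [h1] at hw <;> rw [h2] <;>
      simp only [List.filter_append, List.filter_cons, hxf] at hw ⊢ <;>
      exact hw

theorem stmt15 (k : ℕ) (hk : 3 ≤ k) (w : List ℕ)
    (hw : KnuthEquiv (ascFromTo (k + 1) (2 * k) ++ ascFromTo 1 k) w) :
    [k + 2, k - 1].Sublist w := by
  have hInv : InS k (w.filter (pk k)) := by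
    induction hw with
    | refl => exact base k hk
    | tail _ hstep ih => exact knuthClosure k hk hstep ih
  have hsub : [k + 2, k - 1].Sublist (w.filter (pk k)) := by
    rcases hInv with E | E | E | E | E <;> rw [E] <;> simp
  exact hsub.trans List.filter_sublist
end
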